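/- The convex hull of the ten points ±(1,1,1,-1), ±(1,-1,1,1), ±(1,1,1,1), ±(1,1,-1,-1), ±(1,-1,-1,1) in ℝ⁴ has all ten points as vertices (extreme points). -/

import Mathlib

theorem extreme_of_strict_max {E : Type*} [AddCommGroup E] [Module ℝ E]
    {f : E →ₗ[ℝ] ℝ} {S : Set E} {x : E} (hx : x ∈ S)
    (h : ∀ y ∈ S, y ≠ x → f y < f x) :
    x ∈ Set.extremePoints ℝ (convexHull ℝ S) := by
  have hle : ∀ y ∈ S, f y ≤ f x := by
    intro y hy
    rcases eq_or_ne y x with rfl | hne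
    · exact le_refl _
    · exact (h y hy hne).le
  have hhull : ∀ z ∈ convexHull ℝ S, f z ≤ f x :=
    fun z hz => convexHull_min hle (convex_halfSpace_le f.isLinear _) hz
  have key : ∀ z ∈ convexHull ℝ S, f x ≤ f z → z = x := by
    intro z hz hfz
    rw [convexHull_eq] at hz
    obtain ⟨ι, t, w, p, hw0, hw1, hp, hcm⟩ := hz
    have hz' : z = ∑ i ∈ t, w i • p i := by
      rw [← hcm, Finset.centerMass_eq_of_sum_1 _ _ hw1]
    have hfz' : f z = ∑ i ∈ t, w i * f (p i) := by
      rw [hz', map_sum]; simp [smul_eq_mul]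
    have hterm : ∀ i ∈ t, 0 ≤ w i * (f x - f (p i)) :=
      fun i hi => mul_nonneg (hw0 i hi) (sub_nonneg.2 (hle _ (hp i hi)))
    have hsum0 : ∑ i ∈ t, w i * (f x - f (p i)) = 0 := by
      have : ∑ i ∈ t, w i * (f x - f (p i)) = f x - f z := by
        simp only [mul_sub, Finset.sum_sub_distrib, ← Finset.sum_mul, hw1, one_mul, hfz']
      rw [this]
      linarith [hhull z (by rw [convexHull_eq]; exact ⟨ι, t, w, p, hw0, hw1, hp, hcm⟩)]
    have heach := (Finset.sum_eq_zero_iff_of_nonneg hterm).1 hsum0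
    have hpix : ∀ i ∈ t, w i • p i = w i • x := by
      intro i hi
      rcases eq_or_lt_of_le (hw0 i hi) with h0 | h0
      · rw [← h0, zero_smul, zero_smul]
      · have := heach i hi
        have hfp : f (p i) = f x := by
          have := mul_eq_zero.1 this
          rcases this with h' | h'
          · exact absurd h'.symm (ne_of_lt h0)
          · linarith [sub_eq_zero.1 h']
        have : p i = x := by
          by_contra hne
          exact absurd hfp (ne_of_lt (h _ (hp i hi) hne))
        rw [this]
    have : z = (∑ i ∈ t, w i) • x := by
      rw [hz', Finset.sum_congr rfl hpix, ← Finset.sum_smul]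
    rw [this, hw1, one_smul]
  refine ⟨subset_convexHull ℝ S hx, ?_⟩
  intro x₁ hx₁ x₂ hx₂ hseg
  obtain ⟨a, b, ha, hb, hab, hsum⟩ := hseg
  have hfx : f x = a * f x₁ + b * f x₂ := by
    rw [← hsum]; simp [smul_eq_mul]
  have h1 : f x ≤ f x₁ := by
    by_contra hlt
    push_neg at hlt
    have hc : a * f x₁ + b * f x₂ < a * f x + b * f x :=
      add_lt_add_of_lt_of_le (mul_lt_mul_of_pos_left hlt ha)
        (mul_le_mul_of_nonneg_left (hhull x₂ hx₂) hb.le)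
    rw [← add_mul, hab, one_mul] at hc
    linarith
  have h2 : f x ≤ f x₂ := by
    by_contra hlt
    push_neg at hlt
    have hc : a * f x₁ + b * f x₂ < a * f x + b * f x :=
      add_lt_add_of_le_of_lt (mul_le_mul_of_nonneg_left (hhull x₁ hx₁) ha.le)
        (mul_lt_mul_of_pos_left hlt hb)
    rw [← add_mul, hab, one_mul] at hc
    linarith
  exact key x₁ hx₁ h1

def dotL (v : Fin 4 → ℝ) : (Fin 4 → ℝ) →ₗ[ℝ] ℝ where
  toFun y := ∑ i, v i * y i
  map_add' y z := by simp [mul_add, Finset.sum_add_distrib]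
  map_smul' c y := by
    simp only [Pi.smul_apply, smul_eq_mul, RingHom.id_apply, Finset.mul_sum]
    congr 1; ext i; ring

/-- All ten points `±(1,1,1,-1), ±(1,-1,1,1), ±(1,1,1,1), ±(1,1,-1,-1),
±(1,-1,-1,1)` are extreme points of their convex hull. -/
theorem ten_points_are_vertices :
    let S : Set (Fin 4 → ℝ) :=
      {![1,1,1,-1], ![1,-1,1,1], ![1,1,1,1], ![1,1,-1,-1], ![1,-1,-1,1],
       -![1,1,1,-1], -![1,-1,1,1], -![1,1,1,1], -![1,1,-1,-1], -![1,-1,-1,1]}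
    ∀ x ∈ S, x ∈ Set.extremePoints ℝ (convexHull ℝ S) := by
  intro S x hx
  suffices H : ∀ v ∈ S, ∀ y ∈ S, y ≠ v → dotL v y < dotL v v from
    extreme_of_strict_max hx (H x hx)
  intro v hv y hy hne
  simp only [S, Set.mem_insert_iff, Set.mem_singleton_iff] at hv hy
  rcases hv with rfl|rfl|rfl|rfl|rfl|rfl|rfl|rfl|rfl|rfl <;>
    rcases hy with rfl|rfl|rfl|rfl|rfl|rfl|rfl|rfl|rfl|rfl <;>
      first
        | exact absurd rfl hne
        | norm_num [dotL, Fin.sum_univ_four, Matrix.cons_val_two, Matrix.cons_val_three, Matrix.tail_cons, Matrix.head_cons]
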